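/- arXiv:1008.4059 — 2 statements merged into one kernel-verified Lean document; each statement's English description precedes it below -/
import Mathlib

section
/- Let X be a random variable with the Gamma(α,1) distribution, α > 0. Then for all t > 0 and s ≥ 0, E[ e^{−sX − tX²} ] = ( 2 t^{α/2} Γ(α) )^{-1} · Σ_{k=0}^∞ ( Γ((α+k)/2) / k! ) · ( −(1+s)/√t )^k, where the series converges absolutely; equivalently, E[ e^{−sX − tX²} ] = ( t^{α/2} Γ(α) )^{-1} ∫₀^∞ x^{α−1} e^{−x²} e^{−x(1+s)/√t} dx. -/
open MeasureTheory ProbabilityTheory Real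
open scoped ENNReal NNReal

-- value of the moment integrals of the Gaussian-type density
lemma auxJ {q : ℝ} (hq : -1 < q) :
    ∫ x in Set.Ioi (0:ℝ), x ^ q * Real.exp (-x ^ 2) = Real.Gamma ((q + 1) / 2) / 2 := by
  have h := integral_rpow_mul_exp_neg_rpow (p := 2) (q := q) two_pos hq
  rw [show ∀ r, (1:ℝ)/2 * r = r / 2 by intro r; ring] at h
  rw [← h]
  refine setIntegral_congr_fun measurableSet_Ioi fun x hx => ?_
  norm_num [Real.rpow_natCast x 2]

lemma auxJ_int {q : ℝ} (hq : -1 < q) :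
    IntegrableOn (fun x : ℝ => x ^ q * Real.exp (-x ^ 2)) (Set.Ioi 0) := by
  have := integrableOn_rpow_mul_exp_neg_mul_sq (b := 1) one_pos hq
  simpa using this

lemma key (α : ℝ) (hα : 0 < α) {c : ℝ} (hc : 0 ≤ c) :
    Summable (fun k : ℕ => |Real.Gamma ((α + k) / 2) / k.factorial * (-c) ^ k|) ∧
    (∫ x in Set.Ioi (0:ℝ), x ^ (α - 1) * Real.exp (-x ^ 2) * Real.exp (-c * x))
      = (1/2) * ∑' k : ℕ, Real.Gamma ((α + k) / 2) / k.factorial * (-c) ^ k := by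
  set f : ℕ → ℝ → ℝ :=
    fun k x => x ^ (α - 1) * Real.exp (-x ^ 2) * ((-c * x) ^ k / k.factorial) with hf
  have hmeas : ∀ k, Measurable (f k) := by
    intro k; fun_prop
  -- generic computation of the integrals
  have hcalc : ∀ (d : ℝ) (k : ℕ),
      ∫ x in Set.Ioi (0:ℝ), x ^ (α - 1) * Real.exp (-x ^ 2) * ((d * x) ^ k / k.factorial)
        = d ^ k / k.factorial * (Real.Gamma ((α + k) / 2) / 2) := by
    intro d k
    have hq : (-1:ℝ) < α + k - 1 := by
      have : (0:ℝ) ≤ k := Nat.cast_nonneg k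
      linarith
    have : ∫ x in Set.Ioi (0:ℝ), x ^ (α - 1) * Real.exp (-x ^ 2) * ((d * x) ^ k / k.factorial)
        = ∫ x in Set.Ioi (0:ℝ), (d ^ k / k.factorial) * (x ^ (α + k - 1) * Real.exp (-x ^ 2)) := by
      refine setIntegral_congr_fun measurableSet_Ioi fun x hx => ?_
      have hx : (0:ℝ) < x := hx
      have h1 : x ^ (α + k - 1) = x ^ (α - 1) * x ^ (k:ℕ) := by
        rw [← Real.rpow_natCast x k, ← Real.rpow_add hx]
        ring_nf
      rw [h1, mul_pow]
      ring
    rw [this, integral_const_mul, auxJ hq]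
    norm_num
  -- pointwise sums
  have hsum : ∀ x : ℝ, HasSum (fun k : ℕ => f k x)
      (x ^ (α - 1) * Real.exp (-x ^ 2) * Real.exp (-c * x)) := by
    intro x
    have := NormedSpace.expSeries_div_hasSum_exp (-c * x)
    rw [← Real.exp_eq_exp_ℝ] at this
    exact this.mul_left _
  have habs : ∀ k (x : ℝ), 0 < x →
      |f k x| = x ^ (α - 1) * Real.exp (-x ^ 2) * ((c * x) ^ k / k.factorial) := by
    intro k x hx
    have h1 : (0:ℝ) ≤ x ^ (α - 1) * Real.exp (-x ^ 2) := by positivity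
    rw [hf]
    rw [abs_mul, abs_of_nonneg h1, abs_div, abs_pow, abs_mul, abs_neg,
      abs_of_nonneg hc, abs_of_nonneg hx.le, Nat.abs_cast]
  -- integrability of the absolute sum
  have hGint : IntegrableOn
      (fun x : ℝ => x ^ (α - 1) * Real.exp (-x ^ 2) * Real.exp (c * x)) (Set.Ioi 0) := by
    have hB : IntegrableOn
        (fun x : ℝ => Real.exp (c ^ 2 / 2) * (x ^ (α - 1) * Real.exp (-(1/2) * x ^ 2)))
        (Set.Ioi 0) := by
      exact (integrableOn_rpow_mul_exp_neg_mul_sq (by norm_num) (by linarith)).const_mul _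
    refine Integrable.mono' hB (Measurable.aestronglyMeasurable (by fun_prop)) ?_
    filter_upwards [ae_restrict_mem measurableSet_Ioi] with x hx
    have hx : (0:ℝ) < x := hx
    have h2 : Real.exp (-x ^ 2) * Real.exp (c * x)
        ≤ Real.exp (c ^ 2 / 2) * Real.exp (-(1/2) * x ^ 2) := by
      rw [← Real.exp_add, ← Real.exp_add]
      apply Real.exp_le_exp.mpr
      nlinarith [sq_nonneg (c - x)]
    have h3 : (0:ℝ) ≤ x ^ (α - 1) := by positivity
    rw [Real.norm_eq_abs, abs_of_nonneg (by positivity)]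
    calc x ^ (α - 1) * Real.exp (-x ^ 2) * Real.exp (c * x)
        = x ^ (α - 1) * (Real.exp (-x ^ 2) * Real.exp (c * x)) := by ring
      _ ≤ x ^ (α - 1) * (Real.exp (c ^ 2 / 2) * Real.exp (-(1/2) * x ^ 2)) :=
          mul_le_mul_of_nonneg_left h2 h3
      _ = Real.exp (c ^ 2 / 2) * (x ^ (α - 1) * Real.exp (-(1/2) * x ^ 2)) := by ring
  -- finiteness of the sum of lintegrals
  have hfin : (∑' k : ℕ, ∫⁻ x in Set.Ioi (0:ℝ), ‖f k x‖₊) ≠ ⊤ := by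
    rw [← lintegral_tsum fun k => (hmeas k).nnnorm.coe_nnreal_ennreal.aemeasurable]
    have heq : ∀ᵐ x ∂(volume.restrict (Set.Ioi (0:ℝ))),
        (∑' k : ℕ, (‖f k x‖₊ : ℝ≥0∞))
          = ENNReal.ofReal (x ^ (α - 1) * Real.exp (-x ^ 2) * Real.exp (c * x)) := by
      filter_upwards [ae_restrict_mem measurableSet_Ioi] with x hx
      have hx : (0:ℝ) < x := hx
      have hs : HasSum (fun k : ℕ => x ^ (α - 1) * Real.exp (-x ^ 2) * ((c * x) ^ k / k.factorial))
          (x ^ (α - 1) * Real.exp (-x ^ 2) * Real.exp (c * x)) := by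
        have := NormedSpace.expSeries_div_hasSum_exp (c * x)
        rw [← Real.exp_eq_exp_ℝ] at this
        exact this.mul_left _
      have hnn : ∀ k : ℕ, (0:ℝ) ≤ x ^ (α - 1) * Real.exp (-x ^ 2) * ((c * x) ^ k / k.factorial) :=
        fun k => by positivity
      calc (∑' k : ℕ, (‖f k x‖₊ : ℝ≥0∞))
          = ∑' k : ℕ, ENNReal.ofReal
              (x ^ (α - 1) * Real.exp (-x ^ 2) * ((c * x) ^ k / k.factorial)) := by
            refine tsum_congr fun k => ?_
            rw [← enorm_eq_nnnorm, Real.enorm_eq_ofReal_abs, habs k x hx]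
        _ = ENNReal.ofReal (x ^ (α - 1) * Real.exp (-x ^ 2) * Real.exp (c * x)) := by
            rw [← ENNReal.ofReal_tsum_of_nonneg hnn hs.summable, hs.tsum_eq]
    rw [lintegral_congr_ae heq]
    have := hGint.hasFiniteIntegral
    refine ne_of_lt (lt_of_le_of_lt (lintegral_mono fun x => ?_) this)
    rw [Real.enorm_eq_ofReal_abs]
    exact ENNReal.ofReal_le_ofReal (le_abs_self _)
  -- value of each integral
  have hval : ∀ k : ℕ, ∫ x in Set.Ioi (0:ℝ), f k x
      = (-c) ^ k / k.factorial * (Real.Gamma ((α + k) / 2) / 2) := fun k => hcalc (-c) k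
  constructor
  · -- summability
    have h1 : Summable fun k : ℕ => (∫⁻ x in Set.Ioi (0:ℝ), ‖f k x‖₊).toReal :=
      ENNReal.summable_toReal hfin
    refine ((h1.mul_left 2).congr fun k => ?_)
    have h2 : (∫⁻ x in Set.Ioi (0:ℝ), ‖f k x‖₊).toReal = ∫ x in Set.Ioi (0:ℝ), ‖f k x‖ :=
      (integral_norm_eq_lintegral_enorm (hmeas k).aestronglyMeasurable).symm
    have h3 : ∫ x in Set.Ioi (0:ℝ), ‖f k x‖
        = c ^ k / k.factorial * (Real.Gamma ((α + k) / 2) / 2) := by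
      rw [← hcalc c k]
      refine setIntegral_congr_fun measurableSet_Ioi fun x hx => ?_
      rw [Real.norm_eq_abs, habs k x hx]
    have hG : 0 < Real.Gamma ((α + k) / 2) :=
      Real.Gamma_pos_of_pos (by positivity)
    rw [h2, h3, abs_mul, abs_pow, abs_neg, abs_of_nonneg hc,
      abs_of_nonneg (by positivity : (0:ℝ) ≤ Real.Gamma ((α + k) / 2) / k.factorial)]
    ring
  · -- integral identity
    have h4 : ∫ x in Set.Ioi (0:ℝ), x ^ (α - 1) * Real.exp (-x ^ 2) * Real.exp (-c * x)
        = ∫ x in Set.Ioi (0:ℝ), ∑' k : ℕ, f k x :=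
      integral_congr_ae (Filter.Eventually.of_forall fun x => (hsum x).tsum_eq.symm)
    rw [h4, integral_tsum (fun k => (hmeas k).aestronglyMeasurable) hfin]
    rw [← tsum_mul_left]
    refine tsum_congr fun k => ?_
    rw [hval k]
    ring

/-- the bivariate Laplace transform of `(X, X²)` for a Gamma(α,1) random
variable `X`: for `t > 0` and `s ≥ 0`,
`E[e^{−sX−tX²}] = (2 t^{α/2} Γ(α))⁻¹ Σ_k (Γ((α+k)/2)/k!) (−(1+s)/√t)^k`
(with the series converging absolutely), which equals
`(t^{α/2} Γ(α))⁻¹ ∫₀^∞ x^{α−1} e^{−x²} e^{−x(1+s)/√t} dx`. -/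
theorem stmt_4 {Ω : Type*} [MeasurableSpace Ω] (μ : Measure Ω) [IsProbabilityMeasure μ]
    (α : ℝ) (hα : 0 < α) (X : Ω → ℝ) (hmeas : Measurable X)
    (hlaw : Measure.map X μ = gammaMeasure α 1)
    (s t : ℝ) (ht : 0 < t) (hs : 0 ≤ s) :
    Summable (fun k : ℕ =>
      |Real.Gamma ((α + k) / 2) / k.factorial * (-(1 + s) / Real.sqrt t) ^ k|) ∧
    (∫ ω, Real.exp (-s * X ω - t * (X ω) ^ 2) ∂μ) =
      (2 * t ^ (α / 2) * Real.Gamma α)⁻¹ *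
        ∑' k : ℕ, Real.Gamma ((α + k) / 2) / k.factorial * (-(1 + s) / Real.sqrt t) ^ k ∧
    (∫ ω, Real.exp (-s * X ω - t * (X ω) ^ 2) ∂μ) =
      (t ^ (α / 2) * Real.Gamma α)⁻¹ *
        ∫ x in Set.Ioi (0 : ℝ),
          x ^ (α - 1) * Real.exp (-x ^ 2) * Real.exp (-x * (1 + s) / Real.sqrt t) := by
  have hst : 0 < Real.sqrt t := Real.sqrt_pos.mpr ht
  set c : ℝ := (1 + s) / Real.sqrt t with hc_def
  have hc : 0 ≤ c := by positivity
  have hcc : ∀ k : ℕ, (-(1 + s) / Real.sqrt t) ^ k = (-c) ^ k := by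
    intro k; rw [hc_def]; ring
  obtain ⟨hsummable, hkey⟩ := key α hα hc
  set I : ℝ := ∫ x in Set.Ioi (0:ℝ), x ^ (α - 1) * Real.exp (-x ^ 2) * Real.exp (-c * x) with hI
  have hGammaPos : 0 < Real.Gamma α := Real.Gamma_pos_of_pos hα
  have htpow : 0 < t ^ (α / 2) := Real.rpow_pos_of_pos ht _
  -- the integral in the statement is `I`
  have hI3 : (∫ x in Set.Ioi (0 : ℝ),
      x ^ (α - 1) * Real.exp (-x ^ 2) * Real.exp (-x * (1 + s) / Real.sqrt t)) = I := by
    refine setIntegral_congr_fun measurableSet_Ioi fun x hx => ?_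
    congr 1
    congr 1
    rw [hc_def]; ring
  -- step 1 : map to the gamma measure
  have h1 : (∫ ω, Real.exp (-s * X ω - t * (X ω) ^ 2) ∂μ)
      = ∫ x, Real.exp (-s * x - t * x ^ 2) ∂(gammaMeasure α 1) := by
    rw [← hlaw, integral_map hmeas.aemeasurable
      (Measurable.aestronglyMeasurable (by fun_prop))]
  -- step 2 : withDensity
  have h2 : (∫ x, Real.exp (-s * x - t * x ^ 2) ∂(gammaMeasure α 1))
      = ∫ x, gammaPDFReal α 1 x * Real.exp (-s * x - t * x ^ 2) := by
    rw [gammaMeasure,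
      show gammaPDF α 1 = fun x => ((gammaPDFReal α 1 x).toNNReal : ℝ≥0∞) from rfl,
      integral_withDensity_eq_integral_smul (measurable_gammaPDFReal α 1).real_toNNReal]
    refine integral_congr_ae (Filter.Eventually.of_forall fun x => ?_)
    simp only [NNReal.smul_def, smul_eq_mul]
    rw [Real.coe_toNNReal _ (gammaPDFReal_nonneg hα one_pos x)]
  -- step 3 : restrict to Ioi 0
  have h0 : ∀ᵐ (x : ℝ), x ≠ (0:ℝ) := by
    rw [ae_iff]
    simp only [ne_eq, not_not, Set.setOf_eq_eq_singleton]
    exact Real.volume_singleton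
  have h3 : (∫ x, gammaPDFReal α 1 x * Real.exp (-s * x - t * x ^ 2))
      = ∫ x in Set.Ioi (0:ℝ), gammaPDFReal α 1 x * Real.exp (-s * x - t * x ^ 2) := by
    rw [← integral_indicator measurableSet_Ioi]
    refine integral_congr_ae ?_
    filter_upwards [h0] with x hx0
    by_cases hx : x ∈ Set.Ioi (0:ℝ)
    · rw [Set.indicator_of_mem hx]
    · rw [Set.indicator_of_notMem hx]
      have hxneg : x < 0 := lt_of_le_of_ne (not_lt.mp hx) hx0
      rw [gammaPDFReal, if_neg (not_le.mpr hxneg), zero_mul]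
  -- step 4 : rewrite the density on Ioi 0
  have h4 : (∫ x in Set.Ioi (0:ℝ), gammaPDFReal α 1 x * Real.exp (-s * x - t * x ^ 2))
      = (Real.Gamma α)⁻¹ *
        ∫ x in Set.Ioi (0:ℝ), x ^ (α - 1) * Real.exp (-(t * x ^ 2) - (1 + s) * x) := by
    rw [← integral_const_mul]
    refine setIntegral_congr_fun measurableSet_Ioi fun x hx => ?_
    have hx : (0:ℝ) < x := hx
    rw [gammaPDFReal, if_pos hx.le, Real.one_rpow]
    have he : Real.exp (-(1 * x)) * Real.exp (-s * x - t * x ^ 2)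
        = Real.exp (-(t * x ^ 2) - (1 + s) * x) := by
      rw [← Real.exp_add]; ring_nf
    calc 1 / Real.Gamma α * x ^ (α - 1) * Real.exp (-(1 * x)) * Real.exp (-s * x - t * x ^ 2)
        = 1 / Real.Gamma α * x ^ (α - 1) *
            (Real.exp (-(1 * x)) * Real.exp (-s * x - t * x ^ 2)) := by ring
      _ = (Real.Gamma α)⁻¹ * (x ^ (α - 1) * Real.exp (-(t * x ^ 2) - (1 + s) * x)) := by
          rw [he]; ring
  -- step 5 : substitution x ↦ √t * x
  set g : ℝ → ℝ := fun y => y ^ (α - 1) * Real.exp (-y ^ 2) * Real.exp (-c * y) with hg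
  have hcomp : ∀ x ∈ Set.Ioi (0:ℝ), g (Real.sqrt t * x)
      = Real.sqrt t ^ (α - 1) * (x ^ (α - 1) * Real.exp (-(t * x ^ 2) - (1 + s) * x)) := by
    intro x hx
    have hx : (0:ℝ) < x := hx
    rw [hg]
    simp only
    rw [Real.mul_rpow hst.le hx.le, mul_pow, Real.sq_sqrt ht.le]
    have harg : -c * (Real.sqrt t * x) = -((1 + s) * x) := by
      rw [hc_def]; field_simp
    rw [harg]
    rw [show -(t * x ^ 2) - (1 + s) * x = -(t * x ^ 2) + -((1 + s) * x) by ring, Real.exp_add]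
    ring
  have h5 : (∫ x in Set.Ioi (0:ℝ), x ^ (α - 1) * Real.exp (-(t * x ^ 2) - (1 + s) * x))
      = (Real.sqrt t ^ (α - 1))⁻¹ * ((Real.sqrt t)⁻¹ * I) := by
    have hcm := integral_comp_mul_left_Ioi g 0 hst
    rw [mul_zero] at hcm
    have : (∫ x in Set.Ioi (0:ℝ), g (Real.sqrt t * x))
        = Real.sqrt t ^ (α - 1) *
          ∫ x in Set.Ioi (0:ℝ), x ^ (α - 1) * Real.exp (-(t * x ^ 2) - (1 + s) * x) := by
      rw [← integral_const_mul]
      exact setIntegral_congr_fun measurableSet_Ioi hcomp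
    rw [smul_eq_mul, this, ← hI] at hcm
    have hne : Real.sqrt t ^ (α - 1) ≠ 0 := (Real.rpow_pos_of_pos hst _).ne'
    rw [← hcm]
    rw [inv_mul_cancel_left₀ hne]
  -- the main expression
  have hE : (∫ ω, Real.exp (-s * X ω - t * (X ω) ^ 2) ∂μ)
      = (t ^ (α / 2) * Real.Gamma α)⁻¹ * I := by
    rw [h1, h2, h3, h4, h5]
    have hpow : Real.sqrt t ^ (α - 1) * Real.sqrt t = t ^ (α / 2) := by
      nth_rewrite 2 [← Real.rpow_one (Real.sqrt t)]
      rw [Real.sqrt_eq_rpow, ← Real.rpow_mul ht.le, ← Real.rpow_mul ht.le, ← Real.rpow_add ht]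
      congr 1; ring
    rw [← hpow, mul_inv, mul_inv]
    ring
  refine ⟨?_, ?_, ?_⟩
  · refine hsummable.congr fun k => ?_
    rw [hcc k]
  · rw [hE, hkey]
    have : (2 * t ^ (α / 2) * Real.Gamma α)⁻¹
        = (t ^ (α / 2) * Real.Gamma α)⁻¹ * (1/2) := by
      rw [mul_inv, mul_inv]; ring
    rw [this]
    rw [show (∑' k : ℕ, Real.Gamma ((α + k) / 2) / k.factorial * (-(1 + s) / Real.sqrt t) ^ k)
        = ∑' k : ℕ, Real.Gamma ((α + k) / 2) / k.factorial * (-c) ^ k from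
      tsum_congr fun k => by rw [hcc k]]
    ring
  · rw [hE, hI3]
end

section
/- For every real s with s ≥ −αn, E[ (√n U)^s ] = Σ_{k=0}^∞ p_{α,n,k} · (αn+s)_k / (αn)_k, where the series converges. -/
open MeasureTheory ProbabilityTheory Real
open Filter Topology Set

/-- The Pochhammer symbol `(c)_k = c (c+1) ⋯ (c+k−1)` for a real `c`. -/
noncomputable def poch (c : ℝ) (k : ℕ) : ℝ := ∏ i ∈ Finset.range k, (c + i)

lemma poch_zero (c : ℝ) : poch c 0 = 1 := by simp [poch]

lemma poch_succ (c : ℝ) (k : ℕ) : poch c (k + 1) = poch c k * (c + k) := by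
  simp [poch, Finset.prod_range_succ]

lemma poch_pos {c : ℝ} (hc : 0 < c) (k : ℕ) : 0 < poch c k := by
  refine Finset.prod_pos fun i _ => by positivity

lemma poch_nonneg {c : ℝ} (hc : 0 ≤ c) (k : ℕ) : 0 ≤ poch c k := by
  refine Finset.prod_nonneg fun i _ => by positivity

lemma binom_hasSum {c t : ℝ} (hc : 0 ≤ c) (ht0 : 0 ≤ t) (ht1 : t < 1) :
    HasSum (fun k : ℕ => poch c k / (k.factorial : ℝ) * t ^ k) ((1 - t) ^ (-c)) := by
  rcases eq_or_lt_of_le hc with hc0 | hc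
  · -- c = 0
    subst hc0
    have h : ∀ k : ℕ, k ≠ 0 → poch 0 k / (k.factorial : ℝ) * t ^ k = 0 := by
      intro k hk
      have : poch 0 k = 0 := by
        cases k with
        | zero => exact absurd rfl hk
        | succ m =>
          apply Finset.prod_eq_zero (Finset.mem_range.2 (Nat.succ_pos m))
          norm_num
      simp [this]
    have := hasSum_single (f := fun k : ℕ => poch 0 k / (k.factorial : ℝ) * t ^ k) 0 h
    simpa [poch_zero] using this
  -- c > 0
  set a : ℕ → ℝ := fun k => poch c k / (k.factorial : ℝ) with ha_def
  have hak : ∀ k, 0 < a k := fun k => by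
    have := poch_pos hc k
    have := Nat.factorial_pos k
    positivity
  have hrec : ∀ k : ℕ, a (k + 1) * (k + 1) = a k * (c + k) := by
    intro k
    have hf : ((k + 1).factorial : ℝ) = (k + 1) * (k.factorial : ℝ) := by
      exact_mod_cast Nat.factorial_succ k
    have hf0 : (k.factorial : ℝ) ≠ 0 := Nat.cast_ne_zero.2 (Nat.factorial_ne_zero k)
    have hk1 : ((k : ℝ) + 1) ≠ 0 := by positivity
    simp only [ha_def, poch_succ, hf]
    field_simp
  set r : ℝ := (1 + t) / 2 with hr_def
  have hr0 : 0 < r := by positivity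
  have hrt : t < r := by simp only [hr_def]; linarith
  have hr1 : r < 1 := by simp only [hr_def]; linarith
  -- summability of the master bound v
  set v : ℕ → ℝ := fun k => a k * (c + k) * r ^ k with hv_def
  have hvk : ∀ k, 0 < v k := fun k => by
    have := hak k
    have : (0:ℝ) < c + k := by positivity
    have := hak k
    positivity
  have hv : Summable v := by
    apply summable_of_ratio_test_tendsto_lt_one hr1
      (Eventually.of_forall fun k => (hvk k).ne')
    have heq : ∀ k : ℕ, ‖v (k + 1)‖ / ‖v k‖ = (c / (k + 1) + 1) * r := by
      intro k
      rw [Real.norm_of_nonneg (hvk _).le, Real.norm_of_nonneg (hvk _).le]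
      have h1 : a (k + 1) = a k * (c + k) / (k + 1) := by
        have := hrec k
        field_simp at this ⊢
        linarith [this]
      simp only [hv_def, h1]
      have hk1 : ((k : ℝ) + 1) ≠ 0 := by positivity
      have hck : (c + (k:ℝ)) ≠ 0 := by positivity
      have hak' := (hak k).ne'
      have hr0' := hr0.ne'
      field_simp
      push_cast
      ring
    simp_rw [heq]
    have h0 : Tendsto (fun k : ℕ => c / ((k : ℝ) + 1)) atTop (𝓝 0) := by
      apply Tendsto.div_atTop tendsto_const_nhds
      exact tendsto_atTop_add_const_right _ 1 tendsto_natCast_atTop_atTop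
    have h1 : Tendsto (fun k : ℕ => (c / ((k:ℝ) + 1) + 1) * r) atTop (𝓝 ((0 + 1) * r)) :=
      (h0.add tendsto_const_nhds).mul_const r
    simpa using h1
  -- summability at any |y| ≤ r
  have hsumy : ∀ y : ℝ, |y| ≤ r → Summable (fun k => a k * y ^ k) := by
    intro y hy
    refine Summable.of_norm_bounded (g := fun k => c⁻¹ * v k) (hv.mul_left _) fun k => ?_
    rw [norm_mul, Real.norm_of_nonneg (hak k).le, norm_pow, Real.norm_eq_abs]
    have h1 : |y| ^ k ≤ r ^ k := pow_le_pow_left₀ (abs_nonneg y) hy k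
    have h2 : a k * |y| ^ k ≤ a k * r ^ k :=
      mul_le_mul_of_nonneg_left h1 (hak k).le
    have h3 : a k * r ^ k ≤ c⁻¹ * v k := by
      rw [hv_def]
      have hk0 : (0:ℝ) ≤ k := Nat.cast_nonneg k
      have hrk : (0:ℝ) ≤ r ^ k := by positivity
      have hT : (0:ℝ) ≤ a k * (k:ℝ) * r ^ k :=
        mul_nonneg (mul_nonneg (hak k).le hk0) hrk
      have hcc : c * (a k * r ^ k) ≤ a k * (c + k) * r ^ k := by nlinarith
      calc a k * r ^ k = c⁻¹ * (c * (a k * r ^ k)) := by field_simp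
        _ ≤ c⁻¹ * (a k * (c + k) * r ^ k) :=
            mul_le_mul_of_nonneg_left hcc (by positivity)
    linarith
  have hsum1 : ∀ y : ℝ, |y| ≤ r → Summable (fun k => a k * (c + k) * y ^ k) := by
    intro y hy
    refine Summable.of_norm_bounded (g := v) hv fun k => ?_
    have hck : (0:ℝ) < c + k := by positivity
    rw [norm_mul, norm_mul, Real.norm_of_nonneg (hak k).le, Real.norm_of_nonneg hck.le,
      norm_pow, Real.norm_eq_abs]
    have h1 : |y| ^ k ≤ r ^ k := pow_le_pow_left₀ (abs_nonneg y) hy k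
    exact mul_le_mul_of_nonneg_left h1 (mul_nonneg (hak k).le hck.le)
  have hsum2 : ∀ y : ℝ, |y| ≤ r → Summable (fun k => a k * k * y ^ k) := by
    intro y hy
    refine Summable.of_norm_bounded (g := v) hv fun k => ?_
    have hck : (0:ℝ) < c + k := by positivity
    have hnorm : ‖a k * (k:ℝ) * y ^ k‖ = a k * (k:ℝ) * |y| ^ k := by
      rw [norm_mul, norm_mul, Real.norm_of_nonneg (hak k).le,
        Real.norm_of_nonneg (Nat.cast_nonneg k), norm_pow, Real.norm_eq_abs]
    rw [hnorm]
    have h1 : |y| ^ k ≤ r ^ k := pow_le_pow_left₀ (abs_nonneg y) hy k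
    have h2 : a k * (k:ℝ) * |y| ^ k ≤ a k * (c + k) * |y| ^ k := by
      have hka : (k:ℝ) ≤ c + k := by linarith
      have := mul_le_mul_of_nonneg_left hka (hak k).le
      exact mul_le_mul_of_nonneg_right (by linarith [mul_le_mul_of_nonneg_left hka (hak k).le])
        (pow_nonneg (abs_nonneg y) k)
    calc a k * (k:ℝ) * |y| ^ k ≤ a k * (c + k) * |y| ^ k := h2
      _ ≤ a k * (c + k) * r ^ k :=
          mul_le_mul_of_nonneg_left h1 (mul_nonneg (hak k).le hck.le)
  -- bound for derivatives
  set u : ℕ → ℝ := fun k => a k * k * r ^ (k - 1) with hu_def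
  have huv : ∀ k, u (k + 1) = v k := by
    intro k
    simp only [hu_def, hv_def, Nat.add_sub_cancel]
    push_cast
    linear_combination r ^ k * hrec k
  have hu : Summable u := by
    rw [← summable_nat_add_iff 1]
    simp_rw [huv]
    exact hv
  set g' : ℕ → ℝ → ℝ := fun k y => a k * ((k : ℝ) * y ^ (k - 1)) with hg'_def
  have hderiv : ∀ (y : ℝ), y ∈ Ioo (-r) r →
      HasDerivAt (fun z => ∑' k, a k * z ^ k) (∑' k, g' k y) y := by
    intro y hy
    refine hasDerivAt_tsum_of_isPreconnected (y₀ := 0) hu isOpen_Ioo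
      (convex_Ioo _ _).isPreconnected
      (fun k z _ => (hasDerivAt_pow k z).const_mul (a k)) ?_ ?_ ?_ hy
    · intro k z hz
      have hz' : |z| ≤ r := (abs_lt.2 ⟨hz.1, hz.2⟩).le
      simp only [hg'_def, hu_def]
      rw [norm_mul, Real.norm_of_nonneg (hak k).le, norm_mul,
        Real.norm_of_nonneg (Nat.cast_nonneg k), norm_pow, Real.norm_eq_abs]
      have h1 : |z| ^ (k - 1) ≤ r ^ (k - 1) := pow_le_pow_left₀ (abs_nonneg z) hz' _
      have := (hak k).le
      have hk0 : (0:ℝ) ≤ (k:ℝ) := Nat.cast_nonneg k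
      calc a k * ((k:ℝ) * |z| ^ (k-1)) ≤ a k * ((k:ℝ) * r ^ (k-1)) := by
            exact mul_le_mul_of_nonneg_left (mul_le_mul_of_nonneg_left h1 hk0) this
        _ = a k * (k:ℝ) * r ^ (k-1) := by ring
    · exact ⟨neg_neg_iff_pos.2 hr0, hr0⟩
    · refine summable_of_ne_finset_zero (s := {0}) fun k hk => ?_
      have : k ≠ 0 := by simpa using hk
      simp [zero_pow this]
  set F : ℝ → ℝ := fun y => ∑' k, a k * y ^ k with hF_def
  -- key identity : (1 - y) * (∑' g' k y) = c * F y
  have habs : ∀ y : ℝ, y ∈ Ioo (-r) r → |y| ≤ r := fun y hy =>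
    (abs_lt.2 ⟨hy.1, hy.2⟩).le
  have hkey : ∀ y : ℝ, y ∈ Ioo (-r) r → (1 - y) * (∑' k, g' k y) = c * F y := by
    intro y hy
    have hy' := habs y hy
    have hgsum : Summable (fun k => g' k y) := by
      have h1 : ∀ k, g' (k + 1) y = a k * (c + k) * y ^ k := by
        intro k
        simp only [hg'_def, Nat.add_sub_cancel]
        push_cast
        linear_combination y ^ k * hrec k
      rw [← summable_nat_add_iff 1]
      simp_rw [h1]
      exact hsum1 y hy'
    have hD : (∑' k, g' k y) = ∑' k, a k * (c + k) * y ^ k := by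
      rw [Summable.tsum_eq_zero_add hgsum]
      have h0 : g' 0 y = 0 := by simp [hg'_def]
      have h1 : ∀ k : ℕ, g' (k + 1) y = a k * (c + k) * y ^ k := by
        intro k
        simp only [hg'_def, Nat.add_sub_cancel]
        push_cast
        linear_combination y ^ k * hrec k
      simp_rw [h0, h1, zero_add]
    have hyD : y * (∑' k, g' k y) = ∑' k, a k * k * y ^ k := by
      rw [hD, ← tsum_mul_left, Summable.tsum_eq_zero_add (hsum2 y hy')]
      simp only [Nat.cast_zero, mul_zero, zero_mul, zero_add]
      exact tsum_congr fun k => by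
        push_cast
        linear_combination y ^ (k + 1) * (hrec k).symm
    have hsub : (1 - y) * (∑' k, g' k y)
        = (∑' k, a k * (c + k) * y ^ k) - ∑' k, a k * k * y ^ k := by
      rw [sub_mul, one_mul, hyD, hD]
    rw [hsub, ← Summable.tsum_sub (hsum1 y hy') (hsum2 y hy')]
    rw [hF_def, ← tsum_mul_left]
    exact tsum_congr fun k => by ring
  -- G := F * (1 - ·)^c has zero derivative
  have hGderiv : ∀ y : ℝ, y ∈ Ioo (-r) r →
      HasDerivAt (fun z => F z * (1 - z) ^ c) 0 y := by
    intro y hy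
    have h1y : 0 < 1 - y := by
      have := hy.2
      simp only [hr_def] at this
      linarith
    have hA : HasDerivAt (fun z : ℝ => (1 - z) ^ c)
        (c * (1 - y) ^ (c - 1) * (-1)) y := by
      have hid : HasDerivAt (fun z : ℝ => 1 - z) (-1) y := by
        simpa using (hasDerivAt_id y).const_sub 1
      have h2 := hid.rpow_const (p := c) (Or.inl h1y.ne')
      convert h2 using 1
      ring
    have hB := (hderiv y hy).mul hA
    have hzero : (∑' k, g' k y) * (1 - y) ^ c
        + F y * (c * (1 - y) ^ (c - 1) * (-1)) = 0 := by
      have hpow : (1 - y) ^ c = (1 - y) ^ (c - 1) * (1 - y) := by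
        rw [← Real.rpow_add_one h1y.ne' (c - 1)]
        norm_num
      have hk := hkey y hy
      calc (∑' k, g' k y) * (1 - y) ^ c + F y * (c * (1 - y) ^ (c - 1) * (-1))
          = ((1 - y) * (∑' k, g' k y)) * (1 - y) ^ (c - 1)
            - c * F y * (1 - y) ^ (c - 1) := by rw [hpow]; ring
        _ = 0 := by rw [hk]; ring
    rw [← hzero]
    exact hB
  -- constancy on [0, t]
  have hsub2 : Icc (0:ℝ) t ⊆ Ioo (-r) r := fun x hx =>
    ⟨by linarith [hx.1], by linarith [hx.2]⟩
  have hcont : ContinuousOn (fun z => F z * (1 - z) ^ c) (Icc 0 t) := fun x hx =>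
    ((hGderiv x (hsub2 hx)).continuousAt).continuousWithinAt
  have hconst := constant_of_has_deriv_right_zero hcont
    (fun x hx => (hGderiv x (hsub2 (Ico_subset_Icc_self hx))).hasDerivWithinAt)
    t (right_mem_Icc.2 ht0)
  have hF0 : F 0 = 1 := by
    have h0 : ∀ k : ℕ, k ≠ 0 → a k * (0:ℝ) ^ k = 0 := fun k hk => by simp [zero_pow hk]
    have h1 := (hasSum_single (f := fun k : ℕ => a k * (0:ℝ) ^ k) 0 h0).tsum_eq
    simp only [hF_def]
    rw [h1]
    simp [ha_def, poch_zero]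
  have h1t : (0:ℝ) < 1 - t := by linarith
  have hFt : F t = (1 - t) ^ (-c) := by
    have hne : (1 - t) ^ c ≠ 0 := (Real.rpow_pos_of_pos h1t c).ne'
    have hmul : F t * (1 - t) ^ c = 1 := by
      rw [hconst, hF0]
      norm_num
    rw [Real.rpow_neg h1t.le]
    exact eq_inv_of_mul_eq_one_left hmul
  have hfin : HasSum (fun k : ℕ => a k * t ^ k) (F t) :=
    (hsumy t (by rw [abs_of_nonneg ht0]; exact hrt.le)).hasSum
  rw [hFt] at hfin
  exact hfin


set_option maxHeartbeats 1000000 in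
/-- the Mellin transform / mgf of `log(√n U)`:
for every `s ≥ −αn`, `E[(√n U)^s] = Σ_k p_{α,n,k} (αn+s)_k/(αn)_k`,
where the series converges. -/
theorem stmt_7 {Ω : Type*} [MeasurableSpace Ω] (μ : Measure Ω) [IsProbabilityMeasure μ]
    (α : ℝ) (hα : 0 < α) (n : ℕ) (hn : 2 ≤ n)
    (X : Fin n → Ω → ℝ) (hmeas : ∀ i, Measurable (X i))
    (hindep : iIndepFun X μ)
    (hlaw : ∀ i, Measure.map (X i) μ = gammaMeasure α 1)
    (Y R U C : Ω → ℝ)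
    (hY : ∀ ω, Y ω = ∑ i, X i ω)
    (hR : ∀ ω, R ω = Real.sqrt (∑ i, (X i ω) ^ 2))
    (hU : ∀ ω, U ω = R ω / Y ω)
    (hC : ∀ ω, C ω = Y ω / (Real.sqrt n * R ω))
    (γ : ℝ → ℝ) (hγ : ∀ m : ℝ, γ m = ∫ ω, (C ω) ^ m ∂μ)
    (p : ℕ → ℝ)
    (hp : ∀ k, p k = poch (α * n) k / k.factorial *
      ∑ j ∈ Finset.range (k + 1), (-1 : ℝ) ^ j * (k.choose j) * γ (α * n + j))
    (s : ℝ) (hs : -(α * n) ≤ s) :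
    HasSum (fun k : ℕ => p k * poch (α * n + s) k / poch (α * n) k)
      (∫ ω, (Real.sqrt n * U ω) ^ s ∂μ) := by
  have hn0 : (0:ℝ) < n := by
    have h : (0:ℕ) < n := by omega
    exact_mod_cast h
  have hA : 0 < α * n := mul_pos hα hn0
  have hAs : 0 ≤ α * n + s := by linarith
  -- measurability
  have hYm : Measurable Y := by
    have h : Y = fun ω => ∑ i, X i ω := funext hY
    rw [h]; exact Finset.measurable_sum _ fun i _ => hmeas i
  have hRm : Measurable R := by
    have h : R = fun ω => Real.sqrt (∑ i, X i ω ^ 2) := funext hR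
    rw [h]
    exact (Finset.measurable_sum _ fun i _ => (hmeas i).pow_const 2).sqrt
  have hCm : Measurable C := by
    have h : C = fun ω => Y ω / (Real.sqrt n * R ω) := funext hC
    rw [h]
    exact hYm.div (measurable_const.mul hRm)
  -- a.e. positivity of the X i
  have haeX : ∀ᵐ ω ∂μ, ∀ i, 0 < X i ω := by
    rw [ae_all_iff]
    intro i
    rw [ae_iff]
    have h1 : {ω | ¬ 0 < X i ω} = X i ⁻¹' (Set.Iic 0) := by
      ext ω; simp [not_lt]
    rw [h1, ← Measure.map_apply (hmeas i) measurableSet_Iic, hlaw i]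
    show (volume.withDensity (gammaPDF α 1)) (Set.Iic 0) = 0
    rw [withDensity_apply _ measurableSet_Iic]
    have hsplit : (Set.Iic (0:ℝ)) = Set.Iio 0 ∪ {0} := by
      ext x
      simp [le_iff_lt_or_eq]
    rw [hsplit, lintegral_union (measurableSet_singleton 0) (by simp),
      lintegral_gammaPDF_of_nonpos le_rfl,
      setLIntegral_measure_zero _ _ (measure_singleton 0), add_zero]
  -- a.e. bounds on C
  set b : ℝ := (Real.sqrt n)⁻¹ with hb_def
  have hsqn : 0 < Real.sqrt n := Real.sqrt_pos.2 hn0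
  have hb0 : 0 < b := by positivity
  have hb1 : b ≤ 1 := by
    rw [hb_def]
    have h : (1:ℝ) ≤ Real.sqrt n := by
      rw [show (1:ℝ) = Real.sqrt 1 by simp]
      exact Real.sqrt_le_sqrt (by exact_mod_cast Nat.one_le_of_lt hn)
    exact inv_le_one_of_one_le₀ h
  have haeC : ∀ᵐ ω ∂μ, b ≤ C ω ∧ C ω ≤ 1 ∧ Real.sqrt n * U ω = (C ω)⁻¹ := by
    filter_upwards [haeX] with ω hpos
    have hne : (Finset.univ : Finset (Fin n)).Nonempty :=
      ⟨⟨0, by omega⟩, Finset.mem_univ _⟩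
    have hYpos : 0 < Y ω := by
      rw [hY]; exact Finset.sum_pos (fun i _ => hpos i) hne
    have hS2 : 0 < ∑ i, X i ω ^ 2 :=
      Finset.sum_pos (fun i _ => pow_pos (hpos i) 2) hne
    have hRpos : 0 < R ω := by rw [hR]; exact Real.sqrt_pos.2 hS2
    have hRY : R ω ≤ Y ω := by
      rw [hR, hY]
      have h1 : ∑ i, X i ω ^ 2 ≤ (∑ i, X i ω) ^ 2 :=
        Finset.sum_sq_le_sq_sum_of_nonneg (fun i _ => (hpos i).le)
      calc Real.sqrt (∑ i, X i ω ^ 2) ≤ Real.sqrt ((∑ i, X i ω) ^ 2) :=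
            Real.sqrt_le_sqrt h1
        _ = ∑ i, X i ω := Real.sqrt_sq (Finset.sum_nonneg fun i _ => (hpos i).le)
    have hYR : Y ω ≤ Real.sqrt n * R ω := by
      rw [hY, hR]
      have h2 : (∑ i, X i ω) ^ 2 ≤ (n:ℝ) * ∑ i, X i ω ^ 2 := by
        have h3 := sq_sum_le_card_mul_sum_sq
          (s := (Finset.univ : Finset (Fin n))) (f := fun i => X i ω)
        simpa using h3
      calc ∑ i, X i ω = Real.sqrt ((∑ i, X i ω) ^ 2) :=
            (Real.sqrt_sq (Finset.sum_nonneg fun i _ => (hpos i).le)).symm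
        _ ≤ Real.sqrt ((n:ℝ) * ∑ i, X i ω ^ 2) := Real.sqrt_le_sqrt h2
        _ = Real.sqrt n * Real.sqrt (∑ i, X i ω ^ 2) := Real.sqrt_mul hn0.le _
    refine ⟨?_, ?_, ?_⟩
    · rw [hC, hb_def]
      have h3 : (Real.sqrt n)⁻¹ = R ω / (Real.sqrt n * R ω) := by
        field_simp
      rw [h3]
      gcongr
    · rw [hC]
      exact (div_le_one (by positivity)).2 hYR
    · rw [hU, hC, inv_div, mul_div_assoc]
  -- integrability of C ^ m for m ≥ 0
  have hint : ∀ m : ℝ, 0 ≤ m → Integrable (fun ω => C ω ^ m) μ := by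
    intro m hm
    have hm1 : AEStronglyMeasurable (fun ω => C ω ^ m) μ :=
      (hCm.pow measurable_const).aestronglyMeasurable
    refine Integrable.mono' (integrable_const 1) hm1 ?_
    filter_upwards [haeC] with ω h
    have hC0 : 0 < C ω := hb0.trans_le h.1
    rw [Real.norm_of_nonneg (Real.rpow_nonneg hC0.le m)]
    exact Real.rpow_le_one hC0.le h.2.1 hm
  -- the dominating series
  have hbound := binom_hasSum hAs (by linarith : (0:ℝ) ≤ 1 - b)
    (by linarith : 1 - b < 1)
  set G : ℕ → Ω → ℝ := fun k ω => poch (α * ↑n + s) k / (k.factorial : ℝ) *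
      ((1 - C ω) ^ k * C ω ^ (α * ↑n)) with hG_def
  have hGmeas : ∀ k, AEStronglyMeasurable (G k) μ := fun k =>
    ((((measurable_const.sub hCm).pow_const k).mul
      (hCm.pow measurable_const)).const_mul _).aestronglyMeasurable
  have hGbound : ∀ k, ∀ᵐ ω ∂μ,
      ‖G k ω‖ ≤ poch (α * ↑n + s) k / k.factorial * (1 - b) ^ k := by
    intro k
    filter_upwards [haeC] with ω h
    have hC0 : 0 < C ω := hb0.trans_le h.1
    have h1C : 0 ≤ 1 - C ω := by linarith [h.2.1]
    have h2 : 0 ≤ C ω ^ (α * ↑n) := Real.rpow_nonneg hC0.le _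
    have hpn : 0 ≤ poch (α * ↑n + s) k / k.factorial :=
      div_nonneg (poch_nonneg hAs k) (Nat.cast_nonneg _)
    rw [hG_def]
    rw [Real.norm_of_nonneg (mul_nonneg hpn (mul_nonneg (pow_nonneg h1C k) h2))]
    have e1 : (1 - C ω) ^ k ≤ (1 - b) ^ k := pow_le_pow_left₀ h1C (by linarith [h.1]) k
    have e2 : C ω ^ (α * ↑n) ≤ 1 := Real.rpow_le_one hC0.le h.2.1 hA.le
    have e3 : (1 - C ω) ^ k * C ω ^ (α * ↑n) ≤ (1 - b) ^ k := by
      calc (1 - C ω) ^ k * C ω ^ (α * ↑n) ≤ (1 - C ω) ^ k * 1 :=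
            mul_le_mul_of_nonneg_left e2 (pow_nonneg h1C k)
        _ = (1 - C ω) ^ k := mul_one _
        _ ≤ (1 - b) ^ k := e1
    exact mul_le_mul_of_nonneg_left e3 hpn
  have hlim : ∀ᵐ ω ∂μ, HasSum (fun k => G k ω) ((Real.sqrt n * U ω) ^ s) := by
    filter_upwards [haeC] with ω h
    have hC0 : 0 < C ω := hb0.trans_le h.1
    have h1 := binom_hasSum hAs (by linarith [h.2.1] : (0:ℝ) ≤ 1 - C ω)
      (by linarith : 1 - C ω < 1)
    rw [sub_sub_cancel] at h1
    have h2 := h1.mul_right (C ω ^ (α * ↑n))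
    have h3 : C ω ^ (-(α * ↑n + s)) * C ω ^ (α * ↑n) = (Real.sqrt ↑n * U ω) ^ s := by
      rw [h.2.2, ← Real.rpow_add hC0, show -(α * ↑n + s) + α * ↑n = -s by ring,
        Real.rpow_neg hC0.le, Real.inv_rpow hC0.le]
    have hfun' : (fun k => G k ω) = fun i => poch (α * ↑n + s) i / ↑i.factorial *
        (1 - C ω) ^ i * C ω ^ (α * ↑n) := by
      funext k
      simp only [hG_def]
      ring
    rw [hfun', ← h3]
    exact h2
  have main := hasSum_integral_of_dominated_convergence
    (fun k (_ : Ω) => poch (α * ↑n + s) k / k.factorial * (1 - b) ^ k)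
    hGmeas hGbound
    (Filter.Eventually.of_forall fun ω => hbound.summable)
    (integrable_const _) hlim
  have hterm : ∀ k, ∫ ω, G k ω ∂μ
      = p k * poch (α * ↑n + s) k / poch (α * ↑n) k := by
    intro k
    have hGk : (fun ω => G k ω) = fun ω => poch (α * ↑n + s) k / (k.factorial : ℝ) *
        ((1 - C ω) ^ k * C ω ^ (α * ↑n)) := rfl
    rw [hGk, integral_const_mul]
    have hsum_eq : ∫ ω, ((1 - C ω) ^ k * C ω ^ (α * ↑n)) ∂μ
        = ∑ j ∈ Finset.range (k + 1), (-1:ℝ) ^ j * (k.choose j) * γ (α * ↑n + j) := by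
      have hae : (fun ω => (1 - C ω) ^ k * C ω ^ (α * ↑n)) =ᵐ[μ]
          fun ω => ∑ j ∈ Finset.range (k + 1),
            (-1:ℝ) ^ j * (k.choose j) * C ω ^ (α * ↑n + (j:ℝ)) := by
        filter_upwards [haeC] with ω h
        have hC0 : 0 < C ω := hb0.trans_le h.1
        have hbin : (1 - C ω) ^ k
            = ∑ j ∈ Finset.range (k + 1), (-1:ℝ) ^ j * (k.choose j) * C ω ^ j := by
          rw [show (1 : ℝ) - C ω = -(C ω) + 1 by ring, add_pow]
          refine Finset.sum_congr rfl fun j _ => ?_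
          rw [neg_pow]
          ring
        rw [hbin, Finset.sum_mul]
        refine Finset.sum_congr rfl fun j _ => ?_
        rw [Real.rpow_add hC0, Real.rpow_natCast]
        ring
      have hint2 : ∀ j ∈ Finset.range (k + 1), Integrable
          (fun ω => (-1:ℝ) ^ j * (k.choose j : ℝ) * C ω ^ (α * ↑n + (j:ℝ))) μ :=
        fun j _ => Integrable.const_mul
          (hint (α * ↑n + (j:ℝ)) (add_nonneg hA.le (Nat.cast_nonneg j)))
          ((-1:ℝ) ^ j * (k.choose j : ℝ))
      rw [integral_congr_ae hae, integral_finset_sum _ hint2]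
      refine Finset.sum_congr rfl fun j _ => ?_
      rw [integral_const_mul, ← hγ]
    rw [hsum_eq, hp k]
    have hpoch : poch (α * ↑n) k ≠ 0 := (poch_pos hA k).ne'
    have hfac : (k.factorial : ℝ) ≠ 0 := Nat.cast_ne_zero.2 (Nat.factorial_ne_zero k)
    field_simp
  have hfun : (fun k : ℕ => p k * poch (α * ↑n + s) k / poch (α * ↑n) k)
      = fun k => ∫ ω, G k ω ∂μ := funext fun k => (hterm k).symm
  rw [hfun]
  exact main
end
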